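/- For all integers d ≥ 3, the identity (1/(d-1)) * C(2d-4, d-2) = (1/2^(d-3)) * ∏_{n=0}^{d-4} [ C(d+n, d-3-n) / C(2n+1, n) ] holds, where C denotes the binomial coefficient and the empty product (for d = 3) equals 1. -/

import Mathlib

open Finset Nat

lemma prod_add_two (k : ℕ) : ∏ j ∈ range k, (j + 2) = (k + 1)! := by
  induction k with
  | zero => simp
  | succ k ih => rw [Finset.prod_range_succ, ih, Nat.factorial_succ (k+1)]; ring

lemma my_prod_sub (k : ℕ) : ∏ n ∈ range k, (k + 1 - n) = (k + 1)! := by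
  rw [← prod_add_two k, ← Finset.prod_range_reflect]
  apply Finset.prod_congr rfl
  intro n hn
  simp only [Finset.mem_range] at hn
  omega

lemma factorial_prod (a b : ℕ) : a ! * ∏ n ∈ range b, (a + 1 + n) = (a + b)! := by
  induction b with
  | zero => simp
  | succ b ih =>
      rw [Finset.prod_range_succ, ← mul_assoc, ih]
      rw [show a + (b + 1) = (a + b) + 1 by ring, Nat.factorial_succ]
      ring

lemma catalan_ratio (k : ℕ) : (k + 3) * catalan (k + 2) = 2 * (2 * k + 3) * catalan (k + 1) := by
  have h1 := Nat.succ_mul_centralBinom_succ (k + 1)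
  have h2 := succ_mul_catalan_eq_centralBinom (k + 2)
  have h3 := succ_mul_catalan_eq_centralBinom (k + 1)
  have : (k + 2) * ((k + 3) * catalan (k + 2)) = (k + 2) * (2 * (2 * k + 3) * catalan (k + 1)) := by
    calc (k + 2) * ((k + 3) * catalan (k + 2)) = (k + 1 + 1) * ((k + 2 + 1) * catalan (k + 2)) := by ring
    _ = (k + 1 + 1) * centralBinom (k + 1 + 1) := by rw [h2]
    _ = 2 * (2 * (k + 1) + 1) * centralBinom (k + 1) := h1
    _ = 2 * (2 * k + 3) * ((k + 1 + 1) * catalan (k + 1)) := by rw [h3]; ring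
    _ = (k + 2) * (2 * (2 * k + 3) * catalan (k + 1)) := by ring
  exact Nat.eq_of_mul_eq_mul_left (by omega) this

lemma key (k : ℕ) :
    ∏ n ∈ Finset.range k, ((Nat.choose (k + 3 + n) (k - n) : ℝ) / (Nat.choose (2 * n + 1) n : ℝ))
      = 2 ^ k * catalan (k + 1) := by
  induction k with
  | zero => simp
  | succ k ih =>
      rw [Finset.prod_range_succ]
      have hlast : ((Nat.choose (k + 1 + 3 + k) (k + 1 - k) : ℝ) / (Nat.choose (2 * k + 1) k : ℝ))
          = (2 * k + 4) / (Nat.choose (2 * k + 1) k : ℝ) := by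
        norm_num [show k + 1 + 3 + k = 2 * k + 4 by ring, Nat.choose_one_right]
      have hstep : ∀ n ∈ range k,
          ((Nat.choose (k + 1 + 3 + n) (k + 1 - n) : ℝ) / (Nat.choose (2 * n + 1) n : ℝ))
          = ((Nat.choose (k + 3 + n) (k - n) : ℝ) / (Nat.choose (2 * n + 1) n : ℝ))
            * (((k + 4 + n : ℕ) : ℝ) / ((k + 1 - n : ℕ) : ℝ)) := by
        intro n hn
        simp only [Finset.mem_range] at hn
        have hnat : (k + 4 + n) * Nat.choose (k + 3 + n) (k - n)
            = Nat.choose (k + 4 + n) (k + 1 - n) * (k + 1 - n) := by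
          have := Nat.add_one_mul_choose_eq (k + 3 + n) (k - n)
          rw [show k + 3 + n + 1 = k + 4 + n by omega, show k - n + 1 = k + 1 - n by omega] at this
          exact this
        have h1 : ((k + 1 - n : ℕ) : ℝ) ≠ 0 := by
          have : 0 < k + 1 - n := by omega
          positivity
        have h2 : ((Nat.choose (2 * n + 1) n : ℕ) : ℝ) ≠ 0 := by
          have : 0 < Nat.choose (2 * n + 1) n := Nat.choose_pos (by omega)
          positivity
        rw [show k + 1 + 3 + n = k + 4 + n by ring]
        field_simp
        have := congrArg (fun m : ℕ => (m : ℝ)) hnat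
        push_cast at this ⊢
        nlinarith [this]
      rw [Finset.prod_congr rfl hstep, Finset.prod_mul_distrib, ih, Finset.prod_div_distrib,
        hlast]
      -- numeric products
      have hnat1 : (k + 3)! * ∏ n ∈ range k, (k + 4 + n) = (2 * k + 3)! := by
        have := factorial_prod (k + 3) k
        rw [show k + 3 + k = 2 * k + 3 by ring] at this
        exact this
      have hP1 : ∏ n ∈ range k, ((k + 4 + n : ℕ) : ℝ) = ((2 * k + 3)! : ℝ) / ((k + 3)! : ℝ) := by
        rw [eq_div_iff (by positivity : ((k + 3)! : ℝ) ≠ 0), ← Nat.cast_prod, ← Nat.cast_mul]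
        exact congrArg (Nat.cast : ℕ → ℝ) (by rw [mul_comm]; exact hnat1)
      have hP2 : ∏ n ∈ range k, ((k + 1 - n : ℕ) : ℝ) = ((k + 1)! : ℝ) := by
        rw [← Nat.cast_prod, my_prod_sub]
      rw [hP1, hP2]
      have hch : ((Nat.choose (2 * k + 1) k : ℕ) : ℝ) = ((2 * k + 1)! : ℝ) / (((k)! : ℝ) * ((k + 1)! : ℝ)) := by
        have := Nat.choose_mul_factorial_mul_factorial (show k ≤ 2 * k + 1 by omega)
        rw [show 2 * k + 1 - k = k + 1 by omega] at this
        have h0 : ((k)! : ℝ) ≠ 0 := by positivity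
        have h1 : ((k + 1)! : ℝ) ≠ 0 := by positivity
        field_simp
        exact_mod_cast this
      rw [hch]
      have hcat : ((k : ℝ) + 3) * (catalan (k + 2) : ℝ) = 2 * (2 * k + 3) * (catalan (k + 1) : ℝ) := by
        exact_mod_cast congrArg (fun m : ℕ => (m : ℝ)) (catalan_ratio k)
      have e1 : ((2 * k + 3)! : ℝ) = (2 * k + 3) * (2 * k + 2) * ((2 * k + 1)! : ℝ) := by
        rw [show 2 * k + 3 = (2 * k + 1) + 1 + 1 by ring]
        push_cast [Nat.factorial_succ]
        ring
      have e2 : ((k + 3)! : ℝ) = (k + 3) * (k + 2) * ((k + 1)! : ℝ) := by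
        rw [show k + 3 = (k + 1) + 1 + 1 by ring]
        push_cast [Nat.factorial_succ]
        ring
      have h0 : ((k)! : ℝ) ≠ 0 := by positivity
      have h1 : ((k + 1)! : ℝ) ≠ 0 := by positivity
      have h2 : ((2 * k + 1)! : ℝ) ≠ 0 := by positivity
      have h3 : ((k : ℝ) + 3) ≠ 0 := by positivity
      rw [e1, e2]
      have hc1 : (catalan (k + 2) : ℝ) = 2 * (2 * k + 3) * (catalan (k + 1) : ℝ) / ((k : ℝ) + 3) := by
        field_simp
        linarith [hcat]
      rw [hc1]
      have e3 : ((k + 1)! : ℝ) = ((k : ℝ) + 1) * ((k)! : ℝ) := by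
        push_cast [Nat.factorial_succ]
        ring
      rw [e3]
      field_simp
      ring

theorem stmt_0 (d : ℕ) (hd : 3 ≤ d) :
    (1 / ((d : ℝ) - 1)) * (Nat.choose (2 * d - 4) (d - 2) : ℝ) =
      (1 / 2 ^ (d - 3) : ℝ) *
        ∏ n ∈ Finset.range (d - 3),
          ((Nat.choose (d + n) (d - 3 - n) : ℝ) / (Nat.choose (2 * n + 1) n : ℝ)) := by
  obtain ⟨k, rfl⟩ : ∃ k, d = k + 3 := ⟨d - 3, by omega⟩
  have h1 : k + 3 - 3 = k := by omega
  have h2 : 2 * (k + 3) - 4 = 2 * (k + 1) := by omega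
  have h3 : k + 3 - 2 = k + 1 := by omega
  have h4 : ∀ n, k + 3 - 3 - n = k - n := fun n => by omega
  simp only [h1, h2, h3, h4]
  rw [key k]
  have hcb : (Nat.choose (2 * (k + 1)) (k + 1) : ℝ) = (k + 2) * (catalan (k + 1) : ℝ) := by
    have := succ_mul_catalan_eq_centralBinom (k + 1)
    rw [Nat.centralBinom] at this
    exact_mod_cast (congrArg (fun m : ℕ => (m : ℝ)) this).symm
  rw [hcb]
  have h5 : ((k + 3 : ℕ) : ℝ) - 1 = (k : ℝ) + 2 := by push_cast; ring
  rw [h5]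
  have h6 : ((k : ℝ) + 2) ≠ 0 := by positivity
  have h7 : (2 : ℝ) ^ k ≠ 0 := by positivity
  field_simp
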